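/- arXiv:1108.6312 — 3 statements merged into one kernel-verified Lean document; each statement's English description precedes it below -/
import Mathlib

section
/- Let L ≥ 2 be an integer, ω_L := exp(2πi/L) the primitive L-th root of unity, F := diag(1, ω_L, ω_L², …, ω_L^{L−1}) ∈ ℂ^{L×L}, and 𝟏 ∈ ℂ^L the all-ones vector. Let h₁₁, h₁₂, h₂₁, h₂₂ be nonzero complex numbers and b₂, …, b_L nonzero complex scalars. Define v_{1,1} := 𝟏 and recursively v_{1,ℓ} := b_ℓ·(h₁₁h₂₂/(h₁₂h₂₁))·F^{−1}·v_{1,ℓ−1} for ℓ = 2, …, L, and v_{2,ℓ} := (h₁₁/h₁₂)·v_{1,ℓ} for ℓ = 1, …, L−1. Then: (i) h₁₂·v_{2,ℓ} = h₁₁·v_{1,ℓ} for all ℓ ∈ {1,…,L−1}; (ii) h₂₁·F·v_{1,ℓ+1} = b_{ℓ+1}·h₂₂·v_{2,ℓ} for all ℓ ∈ {1,…,L−1}; (iii) for j ≠ ℓ in {1,…,L}, the vectors v_{1,j} and v_{1,ℓ} are orthogonal, i.e., Σ_{t=1}^{L} (v_{1,j})_t · conj((v_{1,ℓ})_t) =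 0. -/
open Complex

lemma geom_sum_zero_of_root (L : ℕ) (ζ : ℂ) (h1 : ζ ^ L = 1) (h2 : ζ ≠ 1) :
    ∑ t : Fin L, ζ ^ (t : ℕ) = 0 := by
  rw [Fin.sum_univ_eq_sum_range, geom_sum_eq h2, h1]
  simp

/-- Two-user signal alignment: with `ω_L = exp(2πi/L)`, the diagonal matrix
`F = diag(1, ω_L, …, ω_L^{L−1})` (acting entrywise as `(F·v)_t = ω_L^{t−1}·v_t`), nonzero
channel gains `h₁₁, h₁₂, h₂₁, h₂₂`, nonzero scalars `b₂, …, b_L`, and transmit vectors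
`v_{1,1} = 𝟏`, `v_{1,ℓ} = b_ℓ·(h₁₁h₂₂/(h₁₂h₂₁))·F⁻¹·v_{1,ℓ−1}`,
`v_{2,ℓ} = (h₁₁/h₁₂)·v_{1,ℓ}`, we have:
(i) `h₁₂·v_{2,ℓ} = h₁₁·v_{1,ℓ}` for `1 ≤ ℓ ≤ L−1` (alignment at receiver one);
(ii) `h₂₁·F·v_{1,ℓ+1} = b_{ℓ+1}·h₂₂·v_{2,ℓ}` for `1 ≤ ℓ ≤ L−1` (alignment at receiver two);
(iii) for `j ≠ ℓ` in `{1,…,L}`, the vectors `v_{1,j}` and `v_{1,ℓ}` are orthogonal. -/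
theorem two_user_alignment (L : ℕ) (hL : 2 ≤ L)
    (ω : ℂ) (hω : ω = Complex.exp (2 * Real.pi * Complex.I / L))
    (h11 h12 h21 h22 : ℂ) (h11ne : h11 ≠ 0) (h12ne : h12 ≠ 0)
    (h21ne : h21 ≠ 0) (h22ne : h22 ≠ 0)
    (b : ℕ → ℂ) (hb : ∀ ℓ, 2 ≤ ℓ → ℓ ≤ L → b ℓ ≠ 0)
    (v1 v2 : ℕ → Fin L → ℂ)
    (hv1_one : ∀ t : Fin L, v1 1 t = 1)
    (hv1_rec : ∀ ℓ, 2 ≤ ℓ → ℓ ≤ L → ∀ t : Fin L,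
      v1 ℓ t = b ℓ * (h11 * h22 / (h12 * h21)) * (ω ^ (t : ℕ))⁻¹ * v1 (ℓ - 1) t)
    (hv2 : ∀ ℓ, 1 ≤ ℓ → ℓ ≤ L - 1 → ∀ t : Fin L, v2 ℓ t = h11 / h12 * v1 ℓ t) :
    (∀ ℓ, 1 ≤ ℓ → ℓ ≤ L - 1 → ∀ t : Fin L, h12 * v2 ℓ t = h11 * v1 ℓ t) ∧
    (∀ ℓ, 1 ≤ ℓ → ℓ ≤ L - 1 → ∀ t : Fin L,
        h21 * (ω ^ (t : ℕ) * v1 (ℓ + 1) t) = b (ℓ + 1) * h22 * v2 ℓ t) ∧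
    (∀ j ℓ, 1 ≤ j → j ≤ L → 1 ≤ ℓ → ℓ ≤ L → j ≠ ℓ →
        ∑ t : Fin L, v1 j t * starRingEnd ℂ (v1 ℓ t) = 0) := by
  have hLne : L ≠ 0 := by omega
  have hprim : IsPrimitiveRoot ω L := hω ▸ Complex.isPrimitiveRoot_exp L hLne
  have hωne : ω ≠ 0 := hprim.ne_zero hLne
  have hωL : ω ^ L = 1 := hprim.pow_eq_one
  have hωconj : (starRingEnd ℂ) ω = ω⁻¹ := by
    rw [hω, ← Complex.exp_conj]
    have : (starRingEnd ℂ) (2 * ↑Real.pi * Complex.I / ↑L) =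
        -(2 * ↑Real.pi * Complex.I / ↑L) := by
      simp [map_div₀, Complex.conj_I, map_ofNat]
      ring
    rw [this, Complex.exp_neg]
  -- closed form
  have key : ∀ ℓ, 1 ≤ ℓ → ℓ ≤ L → ∃ c : ℂ,
      ∀ t : Fin L, v1 ℓ t = c * ((ω ^ (t : ℕ))⁻¹) ^ (ℓ - 1) := by
    intro ℓ hℓ1
    induction ℓ, hℓ1 using Nat.le_induction with
    | base => intro _; exact ⟨1, fun t => by simp [hv1_one t]⟩
    | succ n hn ih =>
      intro hnL
      obtain ⟨c, hc⟩ := ih (by omega)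
      refine ⟨b (n + 1) * (h11 * h22 / (h12 * h21)) * c, fun t => ?_⟩
      rw [hv1_rec (n + 1) (by omega) hnL t]
      simp only [Nat.add_sub_cancel]
      rw [hc t]
      have hpow : ((ω ^ (t : ℕ))⁻¹) ^ n = (ω ^ (t : ℕ))⁻¹ * ((ω ^ (t : ℕ))⁻¹) ^ (n - 1) := by
        conv_lhs => rw [show n = 1 + (n - 1) by omega]
        rw [pow_add, pow_one]
      rw [hpow]; ring
  refine ⟨?_, ?_, ?_⟩
  · intro ℓ h1 h2 t
    rw [hv2 ℓ h1 h2 t]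
    field_simp
  · intro ℓ h1 h2 t
    rw [hv2 ℓ h1 h2 t, hv1_rec (ℓ + 1) (by omega) (by omega) t]
    simp only [Nat.add_sub_cancel]
    have hx : ω ^ (t : ℕ) ≠ 0 := pow_ne_zero _ hωne
    field_simp
  · intro j ℓ hj1 hjL hℓ1 hℓL hne
    obtain ⟨cj, hcj⟩ := key j hj1 hjL
    obtain ⟨cℓ, hcℓ⟩ := key ℓ hℓ1 hℓL
    have hterm : ∀ t : Fin L, v1 j t * (starRingEnd ℂ) (v1 ℓ t) =
        cj * (starRingEnd ℂ) cℓ * (((ω ^ (t : ℕ))⁻¹) ^ (j - 1) * (ω ^ (t : ℕ)) ^ (ℓ - 1)) := by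
      intro t
      have hconjx : (starRingEnd ℂ) ((ω ^ (t : ℕ))⁻¹) = ω ^ (t : ℕ) := by
        rw [map_inv₀, map_pow, hωconj, inv_pow, inv_inv]
      rw [hcj t, hcℓ t, map_mul, map_pow, hconjx]
      ring
    simp only [hterm]
    rw [← Finset.mul_sum]
    have hxne : ∀ t : Fin L, ω ^ (t : ℕ) ≠ 0 := fun t => pow_ne_zero _ hωne
    rcases Nat.lt_or_ge j ℓ with hlt | hge
    · -- j < ℓ : term is (ω^(ℓ-j))^t
      have hsum : ∀ t : Fin L, ((ω ^ (t : ℕ))⁻¹) ^ (j - 1) * (ω ^ (t : ℕ)) ^ (ℓ - 1) =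
          (ω ^ (ℓ - j)) ^ (t : ℕ) := by
        intro t
        have : (ℓ - 1) = (j - 1) + (ℓ - j) := by omega
        rw [this, pow_add, ← mul_assoc, inv_pow, inv_mul_cancel₀ (pow_ne_zero _ (hxne t)),
          one_mul, ← pow_mul, ← pow_mul, Nat.mul_comm]
      simp only [hsum]
      rw [geom_sum_zero_of_root L _ (by rw [← pow_mul, Nat.mul_comm, pow_mul, hωL, one_pow])
        (hprim.pow_ne_one_of_pos_of_lt (by omega) (by omega)), mul_zero]
    · have hlt' : ℓ < j := by omega
      have hsum : ∀ t : Fin L, ((ω ^ (t : ℕ))⁻¹) ^ (j - 1) * (ω ^ (t : ℕ)) ^ (ℓ - 1) =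
          ((ω ^ (j - ℓ))⁻¹) ^ (t : ℕ) := by
        intro t
        have : (j - 1) = (ℓ - 1) + (j - ℓ) := by omega
        rw [this, pow_add, inv_pow, inv_pow, ← mul_inv, mul_comm ((ω ^ (t : ℕ)) ^ (ℓ - 1)),
          mul_inv, mul_assoc, inv_mul_cancel₀ (pow_ne_zero _ (hxne t)), mul_one,
          ← pow_mul, Nat.mul_comm, pow_mul, ← inv_pow]
      simp only [hsum]
      have hz1 : ((ω ^ (j - ℓ))⁻¹) ^ L = 1 := by
        rw [inv_pow, ← pow_mul, Nat.mul_comm, pow_mul, hωL, one_pow, inv_one]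
      have hz2 : (ω ^ (j - ℓ))⁻¹ ≠ 1 := by
        intro h
        exact hprim.pow_ne_one_of_pos_of_lt (l := j - ℓ) (by omega) (by omega)
          (by rw [← inv_inv (ω ^ (j - ℓ)), h, inv_one])
      rw [geom_sum_zero_of_root L _ hz1 hz2, mul_zero]
end

section
/- Let F be a field (e.g., ℤ/qℤ for q prime), let L ≥ 2 be an integer, and let a_{1,2}, …, a_{1,L} and a_{2,1}, …, a_{2,L−1} be nonzero elements of F. Then the F-linear map from F^{2L−1} to F^{2L−1} sending (w_{1,1}, …, w_{1,L}, w_{2,1}, …, w_{2,L−1}) to (u_{1,1}, …, u_{1,L}, u_{2,1}, …, u_{2,L−1}), where u_{1,j} := w_{1,j} + w_{2,j} for j ∈ {1,…,L−1}, u_{1,L} := w_{1,L}, and u_{2,j} := a_{1,j+1}·w_{1,j+1} + a_{2,j}·w_{2,j} for j ∈ {1,…,L−1}, is a bijection. -/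
/-- Invertibility of the decoded functions in the two-user computation-alignment scheme:
over a field `F`, with nonzero coefficients `a_{1,2}, …, a_{1,L}` and `a_{2,1}, …, a_{2,L−1}`,
the linear map sending `(w_{1,1},…,w_{1,L}, w_{2,1},…,w_{2,L−1})` to
`(u_{1,1},…,u_{1,L}, u_{2,1},…,u_{2,L−1})`, where `u_{1,j} = w_{1,j} + w_{2,j}` for `j < L`,
`u_{1,L} = w_{1,L}`, and `u_{2,j} = a_{1,j+1}·w_{1,j+1} + a_{2,j}·w_{2,j}`, is a bijection.
(Vectors `w₁ : Fin L → F` and `w₂ : Fin (L−1) → F` are zero-indexed: index `i` stands for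
the paper's index `j = i + 1`.) -/
theorem decoded_functions_invertible {F : Type*} [Field F] (L : ℕ) (hL : 2 ≤ L)
    (a1 a2 : ℕ → F)
    (ha1 : ∀ j, 2 ≤ j → j ≤ L → a1 j ≠ 0)
    (ha2 : ∀ j, 1 ≤ j → j ≤ L - 1 → a2 j ≠ 0) :
    Function.Bijective
      (fun w : (Fin L → F) × (Fin (L - 1) → F) =>
        ((fun i : Fin L =>
            if h : (i : ℕ) < L - 1 then w.1 i + w.2 ⟨i, h⟩ else w.1 i,
          fun i : Fin (L - 1) =>
            a1 ((i : ℕ) + 2) * w.1 ⟨(i : ℕ) + 1, by omega⟩ + a2 ((i : ℕ) + 1) * w.2 i) :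
          (Fin L → F) × (Fin (L - 1) → F))) := by
  let φ : ((Fin L → F) × (Fin (L - 1) → F)) →ₗ[F] ((Fin L → F) × (Fin (L - 1) → F)) :=
    { toFun := fun w : (Fin L → F) × (Fin (L - 1) → F) =>
        ((fun i : Fin L =>
            if h : (i : ℕ) < L - 1 then w.1 i + w.2 ⟨i, h⟩ else w.1 i,
          fun i : Fin (L - 1) =>
            a1 ((i : ℕ) + 2) * w.1 ⟨(i : ℕ) + 1, by omega⟩ + a2 ((i : ℕ) + 1) * w.2 i) :
          (Fin L → F) × (Fin (L - 1) → F))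
      map_add' := by
        intro x y
        refine Prod.ext ?_ ?_ <;> funext i <;>
          simp only [Prod.fst_add, Prod.snd_add, Pi.add_apply] <;>
          (try split_ifs) <;> ring
      map_smul' := by
        intro c x
        refine Prod.ext ?_ ?_ <;> funext i <;>
          simp only [Prod.smul_fst, Prod.smul_snd, Pi.smul_apply, smul_eq_mul,
            RingHom.id_apply] <;>
          (try split_ifs) <;> ring }
  have hinj : Function.Injective φ := by
    rw [injective_iff_map_eq_zero]
    intro w hw
    have h1 : ∀ i : Fin L,
        (if h : (i : ℕ) < L - 1 then w.1 i + w.2 ⟨i, h⟩ else w.1 i) = 0 :=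
      fun i => congrFun (congrArg Prod.fst hw) i
    have h2 : ∀ i : Fin (L - 1),
        a1 ((i : ℕ) + 2) * w.1 ⟨(i : ℕ) + 1, by omega⟩ + a2 ((i : ℕ) + 1) * w.2 i = 0 :=
      fun i => congrFun (congrArg Prod.snd hw) i
    have key : ∀ m : ℕ, ∀ i : Fin L, (i : ℕ) + m = L - 1 → w.1 i = 0 := by
      intro m
      induction m with
      | zero =>
        intro i hi
        have := h1 i
        rwa [dif_neg (by omega)] at this
      | succ m ih =>
        intro i hi
        have hlt : (i : ℕ) < L - 1 := by omega
        have h2' := h2 ⟨i, hlt⟩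
        have hnext : w.1 ⟨(i : ℕ) + 1, by omega⟩ = 0 := ih ⟨(i : ℕ) + 1, by omega⟩ (by simp; omega)
        rw [hnext, mul_zero, zero_add] at h2'
        have hw2 : w.2 ⟨i, hlt⟩ = 0 :=
          (mul_eq_zero.mp h2').resolve_left (ha2 ((i : ℕ) + 1) (by omega) (by omega))
        have := h1 i
        rw [dif_pos hlt, hw2, add_zero] at this
        exact this
    have w1all : ∀ i : Fin L, w.1 i = 0 := fun i => key (L - 1 - i) i (by omega)
    have w2all : ∀ j : Fin (L - 1), w.2 j = 0 := by
      intro j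
      have hlt : (j : ℕ) < L - 1 := j.isLt
      have := h1 ⟨j, by omega⟩
      rw [dif_pos hlt, w1all, zero_add] at this
      simpa using this
    refine Prod.ext ?_ ?_ <;> funext i
    · exact w1all i
    · exact w2all i
  exact ⟨hinj, LinearMap.injective_iff_surjective.mp hinj⟩
end

section
/- −∫₀¹ e^{−s} ln(s) ds + ∫₁^∞ e^{−s} ln(s) ds ≤ (3/2)·ln(2). -/
open MeasureTheory Real Set Filter Topology

lemma log_cubic_bound {v : ℝ} (hv : -1 < v) :
    Real.log (1 + v) ≤ v - v ^ 2 / 2 + v ^ 3 / 3 := by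
  set g : ℝ → ℝ := fun x => x - x ^ 2 / 2 + x ^ 3 / 3 - Real.log (1 + x) with hg
  have hderiv : ∀ x : ℝ, -1 < x → HasDerivAt g (x ^ 3 / (1 + x)) x := by
    intro x hx
    have hx1 : (0 : ℝ) < 1 + x := by linarith
    have h1 : HasDerivAt (fun y : ℝ => 1 + y) 1 x := by
      simpa using (hasDerivAt_id x).const_add 1
    have h2 : HasDerivAt (fun y : ℝ => Real.log (1 + y)) ((1 + x)⁻¹ * 1) x :=
      (Real.hasDerivAt_log hx1.ne').comp x h1
    have hp : HasDerivAt (fun y : ℝ => y - y ^ 2 / 2 + y ^ 3 / 3)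
        (1 - (2 : ℕ) * x ^ 1 / 2 + (3 : ℕ) * x ^ 2 / 3) x :=
      ((hasDerivAt_id x).sub ((hasDerivAt_pow 2 x).div_const 2)).add
        ((hasDerivAt_pow 3 x).div_const 3)
    have h := hp.sub h2
    refine h.congr_deriv ?_
    field_simp
    ring
  have hg0 : g 0 = 0 := by simp [hg]
  have key : 0 ≤ g v := by
    rcases lt_trichotomy v 0 with h | h | h
    · have hanti : AntitoneOn g (Icc v 0) := by
        apply antitoneOn_of_hasDerivWithinAt_nonpos (convex_Icc v 0)
          (f' := fun x => x ^ 3 / (1 + x))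
        · intro x hx
          exact (hderiv x (by linarith [hx.1])).continuousAt.continuousWithinAt
        · intro x hx
          rw [interior_Icc] at hx
          exact (hderiv x (by linarith [hx.1])).hasDerivWithinAt
        · intro x hx
          rw [interior_Icc] at hx
          have h1 : (0:ℝ) < 1 + x := by linarith [hx.1]
          have h2 : x ^ 3 ≤ 0 := by nlinarith [hx.2, sq_nonneg x]
          exact div_nonpos_of_nonpos_of_nonneg h2 h1.le
      have := hanti (left_mem_Icc.2 h.le) (right_mem_Icc.2 h.le) h.le
      rw [hg0] at this; linarith
    · simp [h, hg0]
    · have hmono : MonotoneOn g (Icc 0 v) := by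
        apply monotoneOn_of_hasDerivWithinAt_nonneg (convex_Icc 0 v)
          (f' := fun x => x ^ 3 / (1 + x))
        · intro x hx
          exact (hderiv x (by linarith [hx.1])).continuousAt.continuousWithinAt
        · intro x hx
          rw [interior_Icc] at hx
          exact (hderiv x (by linarith [hx.1])).hasDerivWithinAt
        · intro x hx
          rw [interior_Icc] at hx
          have h1 : (0:ℝ) < 1 + x := by linarith [hx.1]
          have h2 : (0:ℝ) ≤ x ^ 3 := pow_nonneg hx.1.le 3
          exact div_nonneg h2 h1.le
      have := hmono (left_mem_Icc.2 h.le) (right_mem_Icc.2 h.le) h.le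
      rw [hg0] at this; linarith
  simp only [hg] at key
  linarith

lemma integrableOn_log_Ioc01 : IntegrableOn Real.log (Ioc (0:ℝ) 1) := by
  have hint : IntegrableOn (fun s : ℝ => 2 * s ^ (-(1/2) : ℝ)) (Ioc (0:ℝ) 1) :=
    ((intervalIntegral.intervalIntegrable_rpow' (by norm_num)).const_mul 2).1
  refine hint.integrable.mono (Real.measurable_log.aestronglyMeasurable.restrict) ?_
  rw [ae_restrict_iff' measurableSet_Ioc]
  filter_upwards with s hs
  have h1 : (0:ℝ) < s := hs.1
  have ht : (0:ℝ) < s ^ (-(1/2) : ℝ) := Real.rpow_pos_of_pos h1 _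
  have hlog : Real.log (s ^ (-(1/2) : ℝ)) ≤ s ^ (-(1/2) : ℝ) - 1 :=
    Real.log_le_sub_one_of_pos ht
  rw [Real.log_rpow h1] at hlog
  have hls : Real.log s ≤ 0 := Real.log_nonpos h1.le hs.2
  rw [Real.norm_eq_abs, Real.norm_eq_abs, abs_of_nonpos hls, abs_of_nonneg (by positivity)]
  linarith

-- P̃ s = 1 - s + s^2/2 - s^3/6 + s^4/24 + s^5/100
lemma exp_neg_le_poly {x : ℝ} (h0 : 0 ≤ x) (h1 : x ≤ 1) :
    Real.exp (-x) ≤ 1 - x + x ^ 2 / 2 - x ^ 3 / 6 + x ^ 4 / 24 + x ^ 5 / 100 := by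
  have hb := Real.exp_bound (x := -x) (by rw [abs_neg, abs_of_nonneg h0]; exact h1)
    (n := 5) (by norm_num)
  rw [abs_neg, abs_of_nonneg h0] at hb
  rw [Finset.sum_range_succ, Finset.sum_range_succ, Finset.sum_range_succ,
    Finset.sum_range_succ, Finset.sum_range_succ] at hb
  norm_num [Nat.factorial] at hb
  have h2 := (abs_le.1 hb).2
  ring_nf at h2 ⊢; linarith [h2]



lemma integrableOn_poly_mul_log :
    IntegrableOn (fun s : ℝ =>
      (1 - s + s ^ 2 / 2 - s ^ 3 / 6 + s ^ 4 / 24 + s ^ 5 / 100) * Real.log s)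
      (Ioc (0:ℝ) 1) := by
  refine integrableOn_log_Ioc01.integrable.bdd_mul (c := 4)
    (Continuous.aestronglyMeasurable (by continuity)) ?_
  rw [ae_restrict_iff' measurableSet_Ioc]
  filter_upwards with s hs
  rw [Real.norm_eq_abs, abs_le]
  constructor <;> nlinarith [hs.1, hs.2, sq_nonneg s, pow_nonneg hs.1.le 3,
    pow_nonneg hs.1.le 4, pow_nonneg hs.1.le 5, pow_le_one₀ hs.1.le hs.2 (n := 2),
    pow_le_one₀ hs.1.le hs.2 (n := 3), pow_le_one₀ hs.1.le hs.2 (n := 4),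
    pow_le_one₀ hs.1.le hs.2 (n := 5)]

lemma integrableOn_exp_mul_log :
    IntegrableOn (fun s : ℝ => Real.exp (-s) * Real.log s) (Ioc (0:ℝ) 1) := by
  refine integrableOn_log_Ioc01.integrable.bdd_mul (c := 1)
    (Continuous.aestronglyMeasurable (by continuity)) ?_
  rw [ae_restrict_iff' measurableSet_Ioc]
  filter_upwards with s hs
  rw [Real.norm_eq_abs, abs_of_nonneg (Real.exp_pos _).le, ← Real.exp_zero]
  exact Real.exp_le_exp.2 (by linarith [hs.1])

lemma integral_poly_mul_log :
    ∫ s in (0:ℝ)..1,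
      (1 - s + s ^ 2 / 2 - s ^ 3 / 6 + s ^ 4 / 24 + s ^ 5 / 100) * Real.log s
      = -(5739 / 7200 : ℝ) := by
  set G : ℝ → ℝ := fun s =>
    (1 - s / 2 + s ^ 2 / 6 - s ^ 3 / 24 + s ^ 4 / 120 + s ^ 5 / 600) * (s * Real.log s)
      - (s - s ^ 2 / 4 + s ^ 3 / 18 - s ^ 4 / 96 + s ^ 5 / 600 + s ^ 6 / 3600) with hG
  have hcont : Continuous G := by
    apply Continuous.sub
    · exact (by continuity : Continuous fun s : ℝ =>
        1 - s / 2 + s ^ 2 / 6 - s ^ 3 / 24 + s ^ 4 / 120 + s ^ 5 / 600).mul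
        Real.continuous_mul_log
    · continuity
  have hderiv : ∀ x ∈ Ioo (0:ℝ) 1, HasDerivAt G
      ((1 - x + x ^ 2 / 2 - x ^ 3 / 6 + x ^ 4 / 24 + x ^ 5 / 100) * Real.log x) x := by
    intro x hx
    have hx0 : x ≠ 0 := hx.1.ne'
    have hxlog : HasDerivAt (fun s : ℝ => s * Real.log s) (1 * Real.log x + x * x⁻¹) x :=
      (hasDerivAt_id x).mul (Real.hasDerivAt_log hx0)
    have hq : HasDerivAt (fun s : ℝ =>
        1 - s / 2 + s ^ 2 / 6 - s ^ 3 / 24 + s ^ 4 / 120 + s ^ 5 / 600)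
        (0 - 1 / 2 + (2:ℕ) * x ^ 1 / 6 - (3:ℕ) * x ^ 2 / 24 + (4:ℕ) * x ^ 3 / 120
          + (5:ℕ) * x ^ 4 / 600) x := by
      exact ((((((hasDerivAt_const x (1:ℝ)).sub ((hasDerivAt_id x).div_const 2)).add
        ((hasDerivAt_pow 2 x).div_const 6)).sub ((hasDerivAt_pow 3 x).div_const 24)).add
        ((hasDerivAt_pow 4 x).div_const 120)).add ((hasDerivAt_pow 5 x).div_const 600))
    have hW : HasDerivAt (fun s : ℝ =>
        s - s ^ 2 / 4 + s ^ 3 / 18 - s ^ 4 / 96 + s ^ 5 / 600 + s ^ 6 / 3600)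
        (1 - (2:ℕ) * x ^ 1 / 4 + (3:ℕ) * x ^ 2 / 18 - (4:ℕ) * x ^ 3 / 96
          + (5:ℕ) * x ^ 4 / 600 + (6:ℕ) * x ^ 5 / 3600) x := by
      exact (((((hasDerivAt_id x).sub ((hasDerivAt_pow 2 x).div_const 4)).add
        ((hasDerivAt_pow 3 x).div_const 18)).sub ((hasDerivAt_pow 4 x).div_const 96)).add
        ((hasDerivAt_pow 5 x).div_const 600)).add ((hasDerivAt_pow 6 x).div_const 3600)
    have h := (hq.mul hxlog).sub hW
    refine h.congr_deriv ?_
    have hinv : x * x⁻¹ = 1 := mul_inv_cancel₀ hx0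
    push_cast
    rw [hinv]
    ring
  have := intervalIntegral.integral_eq_sub_of_hasDeriv_right_of_le (by norm_num)
    hcont.continuousOn (fun x hx => (hderiv x hx).hasDerivWithinAt)
    ((intervalIntegrable_iff_integrableOn_Ioc_of_le (by norm_num)).2 integrableOn_poly_mul_log)
  rw [this, hG]
  norm_num



noncomputable def Qf : ℝ → ℝ := fun s => s ^ 3 / 24 - 3 * s ^ 2 / 8 + 3 * s / 2 + Real.log 2 - 11 / 6

lemma log_le_Qf {s : ℝ} (hs : 1 < s) : Real.log s ≤ Qf s := by
  have hv : (-1 : ℝ) < s / 2 - 1 := by linarith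
  have h1 : Real.log s = Real.log 2 + Real.log (1 + (s / 2 - 1)) := by
    rw [← Real.log_mul two_ne_zero (by linarith : 1 + (s / 2 - 1) ≠ 0)]
    norm_num
    ring_nf
  rw [h1]
  have h2 := log_cubic_bound hv
  have h3 : (s / 2 - 1) - (s / 2 - 1) ^ 2 / 2 + (s / 2 - 1) ^ 3 / 3
      = s ^ 3 / 24 - 3 * s ^ 2 / 8 + 3 * s / 2 - 11 / 6 := by ring
  unfold Qf
  linarith

lemma integrableOn_exp_mul_log_Ioi :
    IntegrableOn (fun s : ℝ => Real.exp (-s) * Real.log s) (Ioi (1:ℝ)) := by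
  apply integrable_of_isBigO_exp_neg (b := 1/2) (by norm_num)
  · intro x hx
    have hx0 : x ≠ 0 := by simp at hx; intro h; simp [h] at hx; linarith
    exact ((Real.continuous_exp.comp continuous_neg).continuousAt.mul
      (Real.continuousAt_log hx0)).continuousWithinAt
  · rw [Asymptotics.isBigO_iff]
    refine ⟨2, ?_⟩
    filter_upwards [eventually_ge_atTop (1:ℝ)] with x hx
    have hx0 : (0:ℝ) < x := by linarith
    have hlog0 : 0 ≤ Real.log x := Real.log_nonneg hx
    have h1 : Real.log x ≤ x := by
      have := Real.log_le_sub_one_of_pos hx0; linarith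
    have h2 : x ≤ 2 * Real.exp (x / 2) := by
      have := Real.add_one_le_exp (x / 2); linarith
    have h4 : Real.exp (-(1/2) * x) * Real.exp (x / 2) = 1 := by
      rw [← Real.exp_add, show -(1/2:ℝ) * x + x / 2 = 0 by ring, Real.exp_zero]
    rw [Real.norm_eq_abs, Real.norm_eq_abs, abs_of_nonneg (by positivity),
      abs_of_nonneg (Real.exp_pos _).le]
    have h3 : Real.exp (-x) = Real.exp (-(1/2) * x) * Real.exp (-(1/2) * x) := by
      rw [← Real.exp_add]; ring_nf
    calc Real.exp (-x) * Real.log x ≤ Real.exp (-x) * x :=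
          mul_le_mul_of_nonneg_left h1 (Real.exp_pos _).le
      _ = Real.exp (-(1/2) * x) * (Real.exp (-(1/2) * x) * x) := by rw [h3]; ring
      _ ≤ Real.exp (-(1/2) * x) * (Real.exp (-(1/2) * x) * (2 * Real.exp (x / 2))) := by
          apply mul_le_mul_of_nonneg_left _ (Real.exp_pos _).le
          exact mul_le_mul_of_nonneg_left h2 (Real.exp_pos _).le
      _ = 2 * (Real.exp (-(1/2) * x) * Real.exp (x / 2)) * Real.exp (-(1/2) * x) := by ring
      _ = 2 * Real.exp (-(1/2) * x) := by rw [h4]; ring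

lemma integrableOn_exp_mul_Qf_Ioi :
    IntegrableOn (fun s : ℝ => Real.exp (-s) * Qf s) (Ioi (1:ℝ)) := by
  apply integrable_of_isBigO_exp_neg (b := 1/2) (by norm_num)
  · exact ((Real.continuous_exp.comp continuous_neg).mul (by unfold Qf; continuity)).continuousOn
  · rw [Asymptotics.isBigO_iff]
    refine ⟨1296, ?_⟩
    filter_upwards [eventually_ge_atTop (1:ℝ)] with x hx
    have hx0 : (0:ℝ) < x := by linarith
    have hlog2 : Real.log 2 ≤ 1 := by
      have := Real.log_le_sub_one_of_pos (by norm_num : (0:ℝ) < 2); linarith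
    have hlog2' : (0:ℝ) ≤ Real.log 2 := Real.log_nonneg (by norm_num)
    have hx3 : (1:ℝ) ≤ x ^ 3 := one_le_pow₀ hx
    have hQ : |Qf x| ≤ 6 * x ^ 3 := by
      rw [abs_le]; unfold Qf
      have hx2 : x ^ 2 ≤ x ^ 3 := by nlinarith
      have hx1 : x ≤ x ^ 3 := by nlinarith
      have hx2' : (0:ℝ) ≤ x ^ 2 := sq_nonneg x
      constructor <;> nlinarith
    have h2 : x ≤ 6 * Real.exp (x / 6) := by
      have := Real.add_one_le_exp (x / 6); linarith
    have h3 : x ^ 3 ≤ 216 * Real.exp (x / 2) := by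
      have he : Real.exp (x / 6) ^ 3 = Real.exp (x / 2) := by
        rw [← Real.exp_nat_mul]; congr 1; push_cast; ring
      calc x ^ 3 ≤ (6 * Real.exp (x / 6)) ^ 3 :=
            pow_le_pow_left₀ hx0.le h2 3
        _ = 216 * Real.exp (x / 6) ^ 3 := by ring
        _ = 216 * Real.exp (x / 2) := by rw [he]
    have h4 : Real.exp (-x) * Real.exp (x / 2) = Real.exp (-(1/2) * x) := by
      rw [← Real.exp_add]; ring_nf
    rw [Real.norm_eq_abs, Real.norm_eq_abs, abs_mul, abs_of_nonneg (Real.exp_pos _).le,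
      abs_of_nonneg (Real.exp_pos (-(1/2)*x)).le]
    calc Real.exp (-x) * |Qf x| ≤ Real.exp (-x) * (6 * (216 * Real.exp (x / 2))) := by
          apply mul_le_mul_of_nonneg_left _ (Real.exp_pos _).le
          calc |Qf x| ≤ 6 * x ^ 3 := hQ
            _ ≤ 6 * (216 * Real.exp (x / 2)) := by nlinarith [h3]
      _ = 1296 * (Real.exp (-x) * Real.exp (x / 2)) := by ring
      _ = 1296 * Real.exp (-(1/2) * x) := by rw [h4]

lemma integral_exp_mul_Qf :
    ∫ s in Ioi (1:ℝ), Real.exp (-s) * Qf s = Real.exp (-1) * (Real.log 2 - 1 / 24) := by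
  set R : ℝ → ℝ := fun s => s ^ 3 / 24 - s ^ 2 / 4 + s + Real.log 2 - 5 / 6 with hR
  set F : ℝ → ℝ := fun s => -(Real.exp (-s) * R s) with hF
  have hderiv : ∀ x ∈ Ici (1:ℝ), HasDerivAt F (Real.exp (-x) * Qf x) x := by
    intro x _
    have hexp : HasDerivAt (fun s : ℝ => Real.exp (-s)) (Real.exp (-x) * (-1)) x :=
      (Real.hasDerivAt_exp (-x)).comp x ((hasDerivAt_id x).neg)
    have hRd : HasDerivAt R ((3:ℕ) * x ^ 2 / 24 - (2:ℕ) * x ^ 1 / 4 + 1) x := by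
      rw [hR]
      have h := (((((hasDerivAt_pow 3 x).div_const 24).sub
        ((hasDerivAt_pow 2 x).div_const 4)).add (hasDerivAt_id' x)).add_const
        (Real.log 2)).sub_const (5/6)
      simpa using h
    have h := (hexp.mul hRd).neg
    refine h.congr_deriv ?_
    unfold Qf
    push_cast
    ring
  have htend : Tendsto F atTop (𝓝 0) := by
    have t0 := tendsto_pow_mul_exp_neg_atTop_nhds_zero 0
    have t1 := tendsto_pow_mul_exp_neg_atTop_nhds_zero 1
    have t2 := tendsto_pow_mul_exp_neg_atTop_nhds_zero 2
    have t3 := tendsto_pow_mul_exp_neg_atTop_nhds_zero 3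
    have h := (((t3.const_mul (-1/24 : ℝ)).add (t2.const_mul (1/4 : ℝ))).add
      (t1.const_mul (-1 : ℝ))).add (t0.const_mul (-(Real.log 2 - 5/6) : ℝ))
    simp only [mul_zero, add_zero] at h
    have heq : F = fun x => -1/24 * (x ^ 3 * Real.exp (-x)) + 1/4 * (x ^ 2 * Real.exp (-x))
        + -1 * (x ^ 1 * Real.exp (-x)) + -(Real.log 2 - 5/6) * (x ^ 0 * Real.exp (-x)) := by
      funext x
      rw [hF, hR]
      simp only [pow_zero, pow_one]
      ring
    rw [heq]
    exact h
  have := integral_Ioi_of_hasDerivAt_of_tendsto' hderiv integrableOn_exp_mul_Qf_Ioi htend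
  rw [this, hF, hR]
  norm_num
  ring

/-- `−∫₀¹ e^{−s} ln s ds + ∫₁^∞ e^{−s} ln s ds ≤ (3/2)·ln 2`. -/
theorem exp_log_integral_le :
    -(∫ s in (0:ℝ)..1, Real.exp (-s) * Real.log s) +
        (∫ s in Set.Ioi (1:ℝ), Real.exp (-s) * Real.log s) ≤ 3 / 2 * Real.log 2 := by
  have hA : -(∫ s in (0:ℝ)..1, Real.exp (-s) * Real.log s) ≤ 5739 / 7200 := by
    have hle : ∀ x ∈ Icc (0:ℝ) 1,
        (1 - x + x ^ 2 / 2 - x ^ 3 / 6 + x ^ 4 / 24 + x ^ 5 / 100) * Real.log x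
          ≤ Real.exp (-x) * Real.log x := by
      intro x hx
      rcases eq_or_lt_of_le hx.1 with h | h
      · simp [← h]
      · exact mul_le_mul_of_nonpos_right (exp_neg_le_poly hx.1 hx.2)
          (Real.log_nonpos h.le hx.2)
    have hmono := intervalIntegral.integral_mono_on (by norm_num : (0:ℝ) ≤ 1)
      ((intervalIntegrable_iff_integrableOn_Ioc_of_le (by norm_num)).2 integrableOn_poly_mul_log)
      ((intervalIntegrable_iff_integrableOn_Ioc_of_le (by norm_num)).2 integrableOn_exp_mul_log)
      hle
    rw [integral_poly_mul_log] at hmono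
    linarith
  have hB : (∫ s in Set.Ioi (1:ℝ), Real.exp (-s) * Real.log s)
      ≤ Real.exp (-1) * (Real.log 2 - 1 / 24) := by
    rw [← integral_exp_mul_Qf]
    apply setIntegral_mono_on integrableOn_exp_mul_log_Ioi integrableOn_exp_mul_Qf_Ioi
      measurableSet_Ioi
    intro x hx
    exact mul_le_mul_of_nonneg_left (log_le_Qf hx) (Real.exp_pos _).le
  have hl1 := Real.log_two_gt_d9
  have hl2 := Real.log_two_lt_d9
  have hexp1 := Real.exp_one_gt_d9
  have hinv : Real.exp (-1) ≤ 0.3678795 := by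
    rw [Real.exp_neg]
    have h1 : ((2.7182818283 : ℝ))⁻¹ ≤ 0.3678795 := by norm_num
    exact le_trans (inv_anti₀ (by norm_num) hexp1.le) h1
  have hkey : Real.exp (-1) * (Real.log 2 - 1 / 24)
      ≤ 0.3678795 * (0.6931471808 - 1 / 24) :=
    mul_le_mul hinv (by linarith) (by linarith) (by norm_num)
  have hnum : (0.3678795 : ℝ) * (0.6931471808 - 1 / 24) ≤ 0.239667 := by norm_num
  linarith
end
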